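/- Let B_0 = B_{0,s} + B_{0,n} be the Jordan–Chevalley decomposition of B_0 ∈ M_{r×r}(ℂ) into commuting semisimple and nilpotent parts, and suppose a family of matrices B_k ∈ M_{r×r}(ℂ) (k ≥ 1) satisfies ad(B_{0,s})(B_k) = k B_k for every k ≥ 1, with only finitely many B_k nonzero. Then the set of eigenvalues of B(1) := ∑_{k≥0} B_k equals the set of eigenvalues of B_0 (counted with multiplicity). -/
import Mathlib

open Polynomial Matrix

/-- If two matrices vanish strictly "above" a weight grading and agree on
equal-weight entries, their determinants agree (Leibniz formula). -/
lemma det_eq_of_weight {n : Type*} [DecidableEq n] [Fintype n] {R : Type*} [CommRing R]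
    (w : n → ℝ) (G H : Matrix n n R)
    (hG : ∀ i j, w i < w j → G i j = 0) (hH : ∀ i j, w i < w j → H i j = 0)
    (hEq : ∀ i j, w i = w j → G i j = H i j) : G.det = H.det := by
  rw [Matrix.det_apply, Matrix.det_apply]
  refine Finset.sum_congr rfl fun σ _ => ?_
  congr 1
  by_cases h : ∃ i, w (σ i) < w i
  · obtain ⟨i, hi⟩ := h
    have hG0 : ∏ i, G (σ i) i = 0 :=
      Finset.prod_eq_zero (f := fun i => G (σ i) i) (Finset.mem_univ i) (hG _ _ hi)
    have hH0 : ∏ i, H (σ i) i = 0 :=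
      Finset.prod_eq_zero (f := fun i => H (σ i) i) (Finset.mem_univ i) (hH _ _ hi)
    rw [hG0, hH0]
  · push_neg at h
    have hsum : ∑ i, w i = ∑ i, w (σ i) := (Equiv.sum_comp σ w).symm
    have hall : ∀ i ∈ Finset.univ, w i = w (σ i) :=
      (Finset.sum_eq_sum_iff_of_le fun i _ => h i).mp hsum
    exact Finset.prod_congr rfl fun i _ =>
      hEq _ _ ((hall i (Finset.mem_univ i)).symm)

lemma charpoly_eq_of_weight {n : Type*} [DecidableEq n] [Fintype n]
    (w : n → ℝ) (M1 M2 : Matrix n n ℂ)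
    (h1 : ∀ i j, w i < w j → M1 i j = 0) (h2 : ∀ i j, w i < w j → M2 i j = 0)
    (hEq : ∀ i j, w i = w j → M1 i j = M2 i j) : M1.charpoly = M2.charpoly := by
  unfold Matrix.charpoly
  apply det_eq_of_weight w
  · intro i j hij
    have hne : i ≠ j := fun h => by subst h; exact lt_irrefl _ hij
    rw [charmatrix_apply_ne _ _ _ hne, h1 i j hij, map_zero, neg_zero]
  · intro i j hij
    have hne : i ≠ j := fun h => by subst h; exact lt_irrefl _ hij
    rw [charmatrix_apply_ne _ _ _ hne, h2 i j hij, map_zero, neg_zero]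
  · intro i j hij
    by_cases hij' : i = j
    · subst hij'
      rw [charmatrix_apply_eq, charmatrix_apply_eq, hEq i i rfl]
    · rw [charmatrix_apply_ne _ _ _ hij', charmatrix_apply_ne _ _ _ hij', hEq i j hij]

lemma charpoly_conj_aux {n : Type*} [DecidableEq n] [Fintype n] {R : Type*} [CommRing R]
    (P Q A : Matrix n n R) (hPQ : P * Q = 1) (hQP : Q * P = 1) :
    (Q * A * P).charpoly = A.charpoly := by
  have hcm : ∀ M : Matrix n n R,
      M.charmatrix = Matrix.scalar n (X : R[X]) - (C : R →+* R[X]).mapMatrix M := fun M => rfl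
  have hQPc : (C : R →+* R[X]).mapMatrix Q * (C : R →+* R[X]).mapMatrix P = 1 := by
    rw [← _root_.map_mul, hQP, _root_.map_one]
  have hmap : (Q * A * P).charmatrix
      = (C : R →+* R[X]).mapMatrix Q * A.charmatrix * (C : R →+* R[X]).mapMatrix P := by
    rw [hcm, hcm, _root_.map_mul, _root_.map_mul, Matrix.mul_sub, Matrix.sub_mul]
    congr 1
    rw [← (Matrix.scalar_commute (X : R[X]) (Commute.all X) ((C : R →+* R[X]).mapMatrix Q)).eq,
      Matrix.mul_assoc, hQPc, Matrix.mul_one]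
  rw [Matrix.charpoly, Matrix.charpoly, hmap, Matrix.det_mul, Matrix.det_mul]
  have h1 : ((C : R →+* R[X]).mapMatrix Q).det * ((C : R →+* R[X]).mapMatrix P).det = 1 := by
    rw [← Matrix.det_mul, hQPc, Matrix.det_one]
  calc ((C : R →+* R[X]).mapMatrix Q).det * A.charmatrix.det * ((C : R →+* R[X]).mapMatrix P).det
      = (((C : R →+* R[X]).mapMatrix Q).det * ((C : R →+* R[X]).mapMatrix P).det)
          * A.charmatrix.det := by ring
    _ = A.charmatrix.det := by rw [h1, one_mul]

/-- Levelt normal form: if `B 0 = S + N` is the Jordan–Chevalley decomposition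
(`S` diagonalizable, `N` nilpotent, commuting) and `ad(S)(B k) = k • B k` for all
`k ≥ 1`, with `B k = 0` for `k ≥ K`, then `B(1) = ∑_{k<K} B k` has the same
characteristic polynomial as `B 0` (i.e. the same eigenvalues with multiplicity). -/
theorem eigenvalues_of_levelt_sum
    (r : ℕ) (B : ℕ → Matrix (Fin r) (Fin r) ℂ)
    (S N : Matrix (Fin r) (Fin r) ℂ)
    (hB0 : B 0 = S + N)
    (hSN : S * N = N * S)
    (hN : IsNilpotent N)
    (hS : ∃ P D : Matrix (Fin r) (Fin r) ℂ, IsUnit P ∧ D.IsDiag ∧ S = P * D * P⁻¹)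
    (K : ℕ) (hfin : ∀ k, K ≤ k → B k = 0)
    (had : ∀ k : ℕ, 1 ≤ k → S * B k - B k * S = (k : ℂ) • B k) :
    (∑ k ∈ Finset.range K, B k).charpoly = (B 0).charpoly := by
  obtain ⟨P, D, hP, hD, hSPD⟩ := hS
  set Q := P⁻¹ with hQdef
  have hdet : IsUnit P.det := (Matrix.isUnit_iff_isUnit_det P).mp hP
  have hPQ : P * Q = 1 := Matrix.mul_nonsing_inv P hdet
  have hQP : Q * P = 1 := Matrix.nonsing_inv_mul P hdet
  set d : Fin r → ℂ := D.diag with hddef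
  have hDd : Matrix.diagonal d = D := hD.diagonal_diag
  set Dg : Matrix (Fin r) (Fin r) ℂ := Matrix.diagonal d with hDg
  -- conjugation
  have hconjmul : ∀ A A' : Matrix (Fin r) (Fin r) ℂ,
      (Q * A * P) * (Q * A' * P) = Q * (A * A') * P := by
    intro A A'
    calc (Q * A * P) * (Q * A' * P) = Q * (A * ((P * Q) * (A' * P))) := by
          simp only [Matrix.mul_assoc]
      _ = Q * (A * (A' * P)) := by rw [hPQ, one_mul]
      _ = Q * (A * A') * P := by simp only [Matrix.mul_assoc]
  have hconjS : Q * S * P = Dg := by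
    rw [hSPD, hDd]
    calc Q * (P * D * Q) * P = (Q * P) * D * (Q * P) := by
          simp only [Matrix.mul_assoc]
      _ = D := by rw [hQP, one_mul, Matrix.mul_one]
  set Nc : Matrix (Fin r) (Fin r) ℂ := Q * N * P with hNc
  have hNcomm : Dg * Nc = Nc * Dg := by
    rw [← hconjS, hNc, hconjmul, hconjmul, hSN]
  set Bc : ℕ → Matrix (Fin r) (Fin r) ℂ := fun k => Q * B k * P with hBc
  have hBcomm : ∀ k, 1 ≤ k → Dg * Bc k - Bc k * Dg = (k : ℂ) • Bc k := by
    intro k hk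
    rw [← hconjS, hBc, hconjmul, hconjmul, ← Matrix.sub_mul, ← Matrix.mul_sub, had k hk]
    simp [Matrix.smul_mul, Matrix.mul_smul]
  -- entrywise facts
  have eN : ∀ i j, d i ≠ d j → Nc i j = 0 := by
    intro i j hij
    have h0 := congrFun (congrFun hNcomm i) j
    rw [hDg, Matrix.diagonal_mul, Matrix.mul_diagonal] at h0
    have : (d i - d j) * Nc i j = 0 := by ring_nf; linear_combination h0
    rcases mul_eq_zero.mp this with h | h
    · exact absurd (sub_eq_zero.mp h) hij
    · exact h
  have eB : ∀ k i j, d i - d j ≠ ((k + 1 : ℕ) : ℂ) → Bc (k + 1) i j = 0 := by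
    intro k i j hij
    have h0 := congrFun (congrFun (hBcomm (k + 1) (Nat.succ_le_succ (Nat.zero_le k))) i) j
    rw [Matrix.sub_apply, hDg, Matrix.diagonal_mul, Matrix.mul_diagonal,
      Matrix.smul_apply, smul_eq_mul] at h0
    have : (d i - d j - ((k + 1 : ℕ) : ℂ)) * Bc (k + 1) i j = 0 := by
      linear_combination h0
    rcases mul_eq_zero.mp this with h | h
    · exact absurd (sub_eq_zero.mp h) hij
    · exact h
  set w : Fin r → ℝ := fun i => (d i).re with hw
  have eB' : ∀ k i j, w i ≤ w j → Bc (k + 1) i j = 0 := by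
    intro k i j hij
    apply eB
    intro hc
    have : (d i - d j).re = (((k + 1 : ℕ) : ℂ)).re := by rw [hc]
    simp only [Complex.sub_re] at this
    have hk1 : (0 : ℝ) < ((k : ℝ) + 1) := by positivity
    simp only [Complex.natCast_re] at this
    push_cast at this
    simp only [hw] at hij
    linarith
  set Rc : Matrix (Fin r) (Fin r) ℂ := ∑ k ∈ Finset.range K, Bc (k + 1) with hRc
  have eR : ∀ i j, w i ≤ w j → Rc i j = 0 := by
    intro i j hij
    rw [hRc, Matrix.sum_apply]
    exact Finset.sum_eq_zero fun k _ => eB' k i j hij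
  have hB0c : Q * B 0 * P = Dg + Nc := by
    rw [hB0, Matrix.mul_add, Matrix.add_mul, hconjS]
  have hM1 : Q * (∑ k ∈ Finset.range (K + 1), B k) * P = Dg + Nc + Rc := by
    rw [Finset.sum_range_succ', Matrix.mul_add, Matrix.add_mul, hB0c, hRc]
    rw [Matrix.mul_sum, Matrix.sum_mul]
    abel
  -- entry conditions for the weight lemma
  have h1 : ∀ i j, w i < w j → (Dg + Nc + Rc) i j = 0 := by
    intro i j hij
    have hne : i ≠ j := fun h => by subst h; exact lt_irrefl _ hij
    have hd : d i ≠ d j := fun h => by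
      simp only [hw] at hij; rw [h] at hij; exact lt_irrefl _ hij
    simp only [Matrix.add_apply]
    rw [hDg, Matrix.diagonal_apply_ne _ hne, eN i j hd, eR i j hij.le]
    simp
  have h2 : ∀ i j, w i < w j → (Dg + Nc) i j = 0 := by
    intro i j hij
    have hne : i ≠ j := fun h => by subst h; exact lt_irrefl _ hij
    have hd : d i ≠ d j := fun h => by
      simp only [hw] at hij; rw [h] at hij; exact lt_irrefl _ hij
    simp only [Matrix.add_apply]
    rw [hDg, Matrix.diagonal_apply_ne _ hne, eN i j hd]
    simp
  have hEq : ∀ i j, w i = w j → (Dg + Nc + Rc) i j = (Dg + Nc) i j := by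
    intro i j hij
    simp only [Matrix.add_apply]
    rw [eR i j hij.le, add_zero]
  calc (∑ k ∈ Finset.range K, B k).charpoly
      = (∑ k ∈ Finset.range (K + 1), B k).charpoly := by
        rw [Finset.sum_range_succ, hfin K le_rfl, add_zero]
    _ = (Q * (∑ k ∈ Finset.range (K + 1), B k) * P).charpoly :=
        (charpoly_conj_aux P Q _ hPQ hQP).symm
    _ = (Dg + Nc + Rc).charpoly := by rw [hM1]
    _ = (Dg + Nc).charpoly := charpoly_eq_of_weight w _ _ h1 h2 hEq
    _ = (Q * B 0 * P).charpoly := by rw [hB0c]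
    _ = (B 0).charpoly := charpoly_conj_aux P Q _ hPQ hQP
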